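/- Let n ≥ 1 and let Q ⊆ ℝⁿ be an open set of finite Lebesgue measure. For δ > 0, let F(δ) be the family of grid cells C(δ,k) = ∏ᵢ [δ·kᵢ, δ·(kᵢ+1)] (k ∈ ℤⁿ) that are entirely contained in Q, and let Q_in(δ) = ⋃ F(δ). Then for every α ∈ [0,1) there exist δ > 0 and N ∈ ℕ such that: (a) F(δ) is finite with |F(δ)| ≤ N; and (b) for every sequence A : ℕ → Set ℝⁿ of measurable subsets of Q satisfying, for each m ∈ ℕ, that if Q_in(δ) ⊄ ⋃_{i<m} A(i) then some cell c ∈ F(δ) has c ⊆ A(m) and c ⊄ ⋃_{i<m} A(i), it holds that vol(⋃_{i<N} A(i)) ≥ α · vol(Q). In particular, after at most N iterations the sets A(0), …, A(N−1) form an α-approximate cover of Q. -/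

import Mathlib

open MeasureTheory
open scoped ENNReal

/-- The closed axis-aligned grid cell at resolution `δ` indexed by `k ∈ ℤⁿ`:
`C(δ,k) = ∏ᵢ [δ·kᵢ, δ·(kᵢ+1)]`. -/
def gridCell (n : ℕ) (δ : ℝ) (k : Fin n → ℤ) : Set (Fin n → ℝ) :=
  Set.univ.pi fun i => Set.Icc (δ * (k i : ℝ)) (δ * ((k i : ℝ) + 1))

/-- The family `F(δ)` of grid cells of resolution `δ` entirely contained in `Q`. -/
def gridFamily (n : ℕ) (δ : ℝ) (Q : Set (Fin n → ℝ)) : Set (Set (Fin n → ℝ)) :=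
  {c : Set (Fin n → ℝ) | ∃ k : Fin n → ℤ, c = gridCell n δ k ∧ c ⊆ Q}

lemma mem_gridCell_floor {n : ℕ} {δ : ℝ} (hδ : 0 < δ) (x : Fin n → ℝ) :
    x ∈ gridCell n δ (fun i => ⌊x i / δ⌋) := by
  intro i _
  simp only [Set.mem_Icc]
  have h1 : (⌊x i / δ⌋ : ℝ) ≤ x i / δ := Int.floor_le _
  have h2 : x i / δ < ⌊x i / δ⌋ + 1 := Int.lt_floor_add_one _
  constructor <;> nlinarith [(le_div_iff₀ hδ).mp h1, (div_lt_iff₀ hδ).mp h2]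

lemma dist_le_of_mem_gridCell {n : ℕ} {δ : ℝ} (hδ : 0 ≤ δ) {k : Fin n → ℤ}
    {x y : Fin n → ℝ} (hx : x ∈ gridCell n δ k) (hy : y ∈ gridCell n δ k) :
    dist x y ≤ δ := by
  rw [dist_pi_le_iff hδ]
  intro i
  have h1 := hx i (Set.mem_univ i)
  have h2 := hy i (Set.mem_univ i)
  simp only [Set.mem_Icc] at h1 h2
  rw [Real.dist_eq, abs_sub_le_iff]
  constructor <;> nlinarith [h1.1, h1.2, h2.1, h2.2]

lemma gridCell_halve {n : ℕ} {δ : ℝ} (hδ : 0 < δ) (k : Fin n → ℤ) (x : Fin n → ℝ)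
    (hx : x ∈ gridCell n δ k) :
    ∃ k' : Fin n → ℤ, x ∈ gridCell n (δ / 2) k' ∧ gridCell n (δ / 2) k' ⊆ gridCell n δ k := by
  refine ⟨fun i => if x i ≤ δ * k i + δ / 2 then 2 * k i else 2 * k i + 1, ?_, ?_⟩
  · intro i _
    have h := hx i (Set.mem_univ i)
    simp only [Set.mem_Icc] at h ⊢
    by_cases hc : x i ≤ δ * k i + δ / 2 <;> simp only [hc, if_true, if_false] <;>
      push_cast <;> constructor <;> nlinarith [h.1, h.2]
  · intro y hy i _
    have h := hy i (Set.mem_univ i)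
    simp only [Set.mem_Icc] at h ⊢
    by_cases hc : x i ≤ δ * k i + δ / 2 <;> simp only [hc, if_true, if_false] at h <;>
      push_cast at h <;> constructor <;> nlinarith [h.1, h.2]

lemma gridKeys_finite {n : ℕ} {δ : ℝ} (hδ : 0 < δ) {Q : Set (Fin n → ℝ)}
    (hQfin : volume Q < ⊤) : {k : Fin n → ℤ | gridCell n δ k ⊆ Q}.Finite := by
  classical
  set B : (Fin n → ℤ) → Set (Fin n → ℝ) := fun k =>
    Set.univ.pi fun i => Set.Ioo (δ * (k i : ℝ)) (δ * ((k i : ℝ) + 1)) with hB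
  have hBsub : ∀ k, B k ⊆ gridCell n δ k := fun k x hx i _ =>
    Set.Ioo_subset_Icc_self (hx i (Set.mem_univ i))
  set As : (Fin n → ℤ) → Set (Fin n → ℝ) := fun k =>
    if gridCell n δ k ⊆ Q then B k else ∅ with hAs
  have hvol : ∀ k, volume (B k) = ENNReal.ofReal δ ^ n := by
    intro k
    rw [hB, volume_pi_pi]
    have : ∀ i : Fin n, volume (Set.Ioo (δ * (k i : ℝ)) (δ * ((k i : ℝ) + 1)))
        = ENNReal.ofReal δ := by
      intro i; rw [Real.volume_Ioo]; ring_nf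
    simp [this]
  have hdisj : Pairwise (Function.onFun Disjoint As) := by
    intro k k' hkk'
    simp only [Function.onFun, Set.disjoint_left]
    intro x hx hx'
    simp only [hAs] at hx hx'
    split_ifs at hx hx' <;> try simp_all
    have hk : ∀ (a : Fin n → ℤ), x ∈ B a → ∀ i, a i = ⌊x i / δ⌋ := by
      intro a ha i
      have h := ha i (Set.mem_univ i)
      simp only [Set.mem_Ioo] at h
      symm
      rw [Int.floor_eq_iff]
      constructor
      · exact le_of_lt ((lt_div_iff₀ hδ).mpr (by nlinarith [h.1]))
      · exact (div_lt_iff₀ hδ).mpr (by nlinarith [h.2])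
    exact hkk' (funext fun i => (hk k (fun i _ => hx i) i).trans (hk k' (fun i _ => hx' i) i).symm)
  have hfin : Set.Finite {k : Fin n → ℤ | ENNReal.ofReal δ ^ n ≤ volume (As k)} := by
    refine Measure.finite_const_le_meas_of_disjoint_iUnion volume
      (ENNReal.pow_pos (ENNReal.ofReal_pos.2 hδ) n) ?_ hdisj ?_
    · intro k
      simp only [hAs]
      split_ifs
      · exact MeasurableSet.univ_pi fun i => measurableSet_Ioo
      · exact MeasurableSet.empty
    · refine ne_top_of_le_ne_top hQfin.ne (measure_mono ?_)
      refine Set.iUnion_subset fun k => ?_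
      simp only [hAs]
      split_ifs with h
      · exact (hBsub k).trans h
      · exact Set.empty_subset _
  refine hfin.subset fun k hk => ?_
  simp only [Set.mem_setOf_eq] at hk ⊢
  simp only [hAs, hk, if_true]; rw [hvol k]

lemma gridFamily_eq_image (n : ℕ) (δ : ℝ) (Q : Set (Fin n → ℝ)) :
    gridFamily n δ Q = gridCell n δ '' {k | gridCell n δ k ⊆ Q} := by
  ext c
  constructor
  · rintro ⟨k, rfl, hsub⟩; exact ⟨k, hsub, rfl⟩
  · rintro ⟨k, hk, rfl⟩; exact ⟨k, rfl, hk⟩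

/-- Probabilistic completeness of the covering procedure: for every cover fraction
`α ∈ [0,1)` there are a resolution `δ > 0` and an iteration bound `N` such that the family of
cells inside `Q` is finite of cardinality at most `N`, and any sequence of measurable subsets
of `Q` whose every iteration wholly covers a previously uncovered cell (as long as the inner
grid region is not yet covered) reaches an `α`-approximate cover of `Q` within `N` steps. -/
theorem covering_probabilistically_complete (n : ℕ) (hn : 1 ≤ n)
    (Q : Set (Fin n → ℝ)) (hQopen : IsOpen Q) (hQfin : volume Q < ⊤)
    (α : ℝ) (hα0 : 0 ≤ α) (hα1 : α < 1) :
    ∃ δ : ℝ, 0 < δ ∧ ∃ N : ℕ,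
      (gridFamily n δ Q).Finite ∧ (gridFamily n δ Q).ncard ≤ N ∧
      ∀ A : ℕ → Set (Fin n → ℝ),
        (∀ m : ℕ, MeasurableSet (A m)) →
        (∀ m : ℕ, A m ⊆ Q) →
        (∀ m : ℕ, ¬ (⋃₀ gridFamily n δ Q) ⊆ (⋃ i < m, A i) →
          ∃ c ∈ gridFamily n δ Q, c ⊆ A m ∧ ¬ c ⊆ (⋃ i < m, A i)) →
        ENNReal.ofReal α * volume Q ≤ volume (⋃ i < N, A i) := by
  have hδpos : ∀ m : ℕ, (0:ℝ) < (2:ℝ)⁻¹ ^ m := fun m => pow_pos (by norm_num) m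
  set Qin : ℕ → Set (Fin n → ℝ) := fun m => ⋃₀ gridFamily n ((2:ℝ)⁻¹ ^ m) Q with hQin
  have hQinQ : ∀ m, Qin m ⊆ Q := by
    intro m x hx
    obtain ⟨c, ⟨k, rfl, hsub⟩, hxc⟩ := hx
    exact hsub hxc
  have hmono : Monotone Qin := by
    apply monotone_nat_of_le_succ
    intro m x hx
    obtain ⟨c, ⟨k, rfl, hsub⟩, hxc⟩ := hx
    obtain ⟨k', hx', hsub'⟩ := gridCell_halve (hδpos m) k x hxc
    have heq : (2:ℝ)⁻¹ ^ m / 2 = (2:ℝ)⁻¹ ^ (m+1) := by ring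
    rw [heq] at hx' hsub'
    exact ⟨gridCell n ((2:ℝ)⁻¹ ^ (m+1)) k', ⟨k', rfl, hsub'.trans hsub⟩, hx'⟩
  have hunion : ⋃ m, Qin m = Q := by
    apply Set.Subset.antisymm (Set.iUnion_subset hQinQ)
    intro x hx
    obtain ⟨ε, hε, hball⟩ := Metric.isOpen_iff.mp hQopen x hx
    obtain ⟨m, hm⟩ := exists_pow_lt_of_lt_one hε (by norm_num : (2:ℝ)⁻¹ < 1)
    refine Set.mem_iUnion.mpr ⟨m, ?_⟩
    have hxc := mem_gridCell_floor (hδpos m) x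
    refine ⟨_, ⟨fun i => ⌊x i / (2:ℝ)⁻¹ ^ m⌋, rfl, ?_⟩, hxc⟩
    intro y hy
    apply hball
    rw [Metric.mem_ball]
    calc dist y x ≤ (2:ℝ)⁻¹ ^ m := dist_le_of_mem_gridCell (hδpos m).le hy hxc
      _ < ε := hm
  have hex : ∃ m : ℕ, ENNReal.ofReal α * volume Q ≤ volume (Qin m) := by
    rcases eq_or_ne (volume Q) 0 with h0 | h0
    · exact ⟨0, by simp [h0]⟩
    · have hlt : ENNReal.ofReal α * volume Q < volume Q := by
        calc ENNReal.ofReal α * volume Q < 1 * volume Q := by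
              refine (ENNReal.mul_lt_mul_iff_left h0 hQfin.ne).mpr ?_
              rwa [← ENNReal.ofReal_one, ENNReal.ofReal_lt_ofReal_iff one_pos]
          _ = volume Q := one_mul _
      have ht := tendsto_measure_iUnion_atTop (μ := volume) hmono
      rw [hunion] at ht
      obtain ⟨m, hm⟩ := (ht.eventually (eventually_gt_nhds hlt)).exists
      exact ⟨m, hm.le⟩
  obtain ⟨m, hm⟩ := hex
  set δ := (2:ℝ)⁻¹ ^ m with hδdef
  refine ⟨δ, hδpos m, ?_⟩
  have hKfin := gridKeys_finite (Q := Q) (hδpos m) hQfin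
  have hFfin : (gridFamily n δ Q).Finite := by
    rw [gridFamily_eq_image]; exact hKfin.image _
  refine ⟨(gridFamily n δ Q).ncard, hFfin, le_rfl, ?_⟩
  intro A _ _ hstep
  set N := (gridFamily n δ Q).ncard with hN
  set U : ℕ → Set (Fin n → ℝ) := fun j => ⋃ i < j, A i with hU
  have hUmono : Monotone U := by
    intro a b hab x hx
    simp only [hU, Set.mem_iUnion] at hx ⊢
    obtain ⟨i, hi, hxi⟩ := hx
    exact ⟨i, lt_of_lt_of_le hi hab, hxi⟩
  have key : ⋃₀ gridFamily n δ Q ⊆ U N := by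
    by_contra hnot
    have hcount : ∀ j, j ≤ N → j ≤ {c ∈ gridFamily n δ Q | c ⊆ U j}.ncard := by
      intro j
      induction j with
      | zero => intro _; exact Nat.zero_le _
      | succ j ih =>
        intro hj
        have hj' : j ≤ N := Nat.le_of_succ_le hj
        have h1 := ih hj'
        have hne : ¬ ⋃₀ gridFamily n δ Q ⊆ U j :=
          fun h => hnot (h.trans (hUmono hj'))
        obtain ⟨c, hcF, hcA, hcnot⟩ := hstep j hne
        have hAU : A j ⊆ U (j+1) := fun y hy =>
          Set.mem_biUnion (Nat.lt_succ_self j) hy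
        have hsub : insert c {c' ∈ gridFamily n δ Q | c' ⊆ U j}
            ⊆ {c' ∈ gridFamily n δ Q | c' ⊆ U (j+1)} := by
          rintro d (rfl | hd)
          · exact ⟨hcF, hcA.trans hAU⟩
          · exact ⟨hd.1, hd.2.trans (hUmono (Nat.le_succ j))⟩
        have hfin1 : {c' ∈ gridFamily n δ Q | c' ⊆ U (j+1)}.Finite :=
          hFfin.subset (Set.sep_subset _ _)
        calc j + 1 ≤ {c' ∈ gridFamily n δ Q | c' ⊆ U j}.ncard + 1 := by omega
          _ = (insert c {c' ∈ gridFamily n δ Q | c' ⊆ U j}).ncard :=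
            (Set.ncard_insert_of_notMem (fun h => hcnot h.2)
              (hFfin.subset (Set.sep_subset _ _))).symm
          _ ≤ _ := Set.ncard_le_ncard hsub hfin1
    have hNle := hcount N le_rfl
    have heq : {c ∈ gridFamily n δ Q | c ⊆ U N} = gridFamily n δ Q :=
      Set.eq_of_subset_of_ncard_le (Set.sep_subset _ _) (by rw [hN] at hNle ⊢; omega) hFfin
    apply hnot
    refine Set.sUnion_subset fun c hc => ?_
    rw [← heq] at hc
    exact hc.2
  calc ENNReal.ofReal α * volume Q ≤ volume (Qin m) := hm
    _ ≤ volume (U N) := measure_mono key
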